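/- For every Ẽ < 0 there exists a constant C_Ẽ (independent of Λ, ω and I) such that for every finite box Λ ⊂ ℤ^d and every interval I ⊂ (−∞, Ẽ], tr E_{H_{ω,Λ}}(I) ≤ C_Ẽ · tr( χ_{Γ∩Λ} E_{H_{ω,Λ}}(I) ), where E_{H_{ω,Λ}}(I) is the spectral projection of the Hermitian matrix H_{ω,Λ} onto I and χ_{Γ∩Λ} is the coordinate projection onto the sites of Λ lying in Γ. -/

import Mathlib

open MeasureTheory ENNReal Filter

noncomputable section

/-- Sites of the lattice `ℤ^d`. -/
abbrev Site (d : ℕ) := Fin d → ℤ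

/-- `n ∈ Γ = M ℤ^d`. -/
def inGamma (M : ℕ) {d : ℕ} (n : Site d) : Prop := ∀ i, (M : ℤ) ∣ n i

instance {M d : ℕ} : DecidablePred (inGamma M (d := d)) := fun _ =>
  Fintype.decidableForallFintype

/-- ℓ¹ (graph) distance on `ℤ^d`. -/
def dist1 {d : ℕ} (x y : Site d) : ℤ := ∑ i, |x i - y i|

/-- The sporadic random potential: `V_ω(n) = ω n` for `n ∈ Γ`, `0` otherwise. -/
def sporadicV (M : ℕ) {d : ℕ} (ω : Site d → ℝ) (n : Site d) : ℝ :=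
  if inGamma M n then ω n else 0

/-- The matrix of `H_ω = H_0 + λ V_ω` restricted to a finite set `Λ ⊂ ℤ^d`:
`H_{ω,Λ} = χ_Λ H_ω χ_Λ`. -/
def HBox {d : ℕ} (M : ℕ) (lam : ℝ) (ω : Site d → ℝ) (Λ : Finset (Site d)) :
    Matrix Λ Λ ℝ := fun x y =>
  if (x : Site d) = (y : Site d) then 2 * d + lam * sporadicV M ω x
  else if dist1 (x : Site d) (y : Site d) = 1 then -1 else 0

lemma HBox_isHermitian {d : ℕ} (M : ℕ) (lam : ℝ) (ω : Site d → ℝ) (Λ : Finset (Site d)) :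
    (HBox M lam ω Λ).IsHermitian := by
  ext x y
  simp only [HBox, Matrix.conjTranspose_apply, star_trivial]
  have h1 : ((y : Site d) = (x : Site d)) ↔ ((x : Site d) = (y : Site d)) := eq_comm
  have h2 : dist1 (y : Site d) (x : Site d) = dist1 (x : Site d) (y : Site d) := by
    unfold dist1; exact Finset.sum_congr rfl fun i _ => abs_sub_comm _ _
  by_cases h : (x : Site d) = (y : Site d)
  · simp [h, Subtype.ext h]
  · have h' : ¬((y : Site d) = (x : Site d)) := fun hh => h hh.symm
    simp [h, h', h2]

/-- The number of eigenvalues (counted with multiplicity) of a matrix in a set `I ⊆ ℝ`;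
for a Hermitian matrix this is `tr E_A(I)`. -/
def eigCount {n : Type*} [Fintype n] [DecidableEq n] (A : Matrix n n ℝ) (I : Set ℝ) : ℕ := by
  classical exact (A.charpoly.roots.filter (· ∈ I)).card

/-- The cube `Λ_L` of side length `L` centered at `0`: the points `x` with
`-L/2 < x ν ≤ L/2`; it contains `L^d` points. -/
def cube (d L : ℕ) : Finset (Site d) :=
  Finset.Icc (fun _ => (L : ℤ) / 2 - L + 1) (fun _ => (L : ℤ) / 2)

/-- `ℙ` makes the coordinates `(ω n)` i.i.d. with common distribution `μ`. -/
def IsIIDwith {d : ℕ} (ℙ : Measure (Site d → ℝ)) (μ : Measure ℝ) : Prop :=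
  IsProbabilityMeasure ℙ ∧
    ProbabilityTheory.iIndepFun (fun n ω => ω n) ℙ ∧
    ∀ n : Site d, ℙ.map (fun ω => ω n) = μ

/-- The standing assumptions on the single–site distribution `μ`: it is a probability
measure with a bounded density and compact support, its support contains more than one
point, and `inf supp μ < 0`. -/
structure GoodMeasure (μ : Measure ℝ) : Prop where
  prob : IsProbabilityMeasure μ
  boundedDensity : ∃ ρ : ℝ → ℝ, (∀ x, 0 ≤ ρ x) ∧ (∃ B, ∀ x, ρ x ≤ B) ∧
    μ = volume.withDensity (fun x => ENNReal.ofReal (ρ x))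
  compactSupport : ∃ K : Set ℝ, IsCompact K ∧ μ Kᶜ = 0
  nontrivialSupport : ∃ x y : ℝ, x ≠ y ∧ (∀ ε > 0, 0 < μ (Metric.ball x ε)) ∧
    (∀ ε > 0, 0 < μ (Metric.ball y ε))
  negSupport : ∃ x < (0:ℝ), ∀ ε > 0, 0 < μ (Metric.ball x ε)

end
noncomputable section

open scoped ComplexOrder in
/-- The spectral projection `E_A(I)` of a Hermitian matrix `A` onto a set `I ⊆ ℝ`:
the orthogonal projection onto the span of the eigenvectors with eigenvalue in `I`. -/
def specProj {n : Type*} [Fintype n] [DecidableEq n] {A : Matrix n n ℝ}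
    (hA : A.IsHermitian) (I : Set ℝ) : Matrix n n ℝ := by
  classical exact ∑ i, if hA.eigenvalues i ∈ I then
    Matrix.of (fun j k => hA.eigenvectorBasis i j * hA.eigenvectorBasis i k) else 0

/-- The coordinate projection `χ_{Γ∩Λ}` onto the sites of `Λ` lying in `Γ`. -/
def gammaProj {d : ℕ} (M : ℕ) (Λ : Finset (Site d)) : Matrix Λ Λ ℝ :=
  Matrix.diagonal (fun x => if inGamma M (x : Site d) then 1 else 0)

end
noncomputable section


lemma sum_sq_eigenvectorBasis {n : Type*} [Fintype n] [DecidableEq n]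
    {A : Matrix n n ℝ} (hA : A.IsHermitian) (i : n) :
    ∑ j : n, hA.eigenvectorBasis i j * hA.eigenvectorBasis i j = 1 := by
  have h2 : ‖hA.eigenvectorBasis i‖ = 1 := hA.eigenvectorBasis.orthonormal.1 i
  have h3 := EuclideanSpace.norm_eq (hA.eigenvectorBasis i)
  rw [h2] at h3
  have hnn : 0 ≤ ∑ j : n, ‖hA.eigenvectorBasis i j‖ ^ 2 :=
    Finset.sum_nonneg fun j _ => sq_nonneg _
  have h4 : ∑ j : n, ‖hA.eigenvectorBasis i j‖ ^ 2 = 1 := by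
    nlinarith [Real.sq_sqrt hnn]
  calc ∑ j : n, hA.eigenvectorBasis i j * hA.eigenvectorBasis i j
      = ∑ j : n, ‖hA.eigenvectorBasis i j‖ ^ 2 := by
        refine Finset.sum_congr rfl fun j _ => ?_
        rw [Real.norm_eq_abs, sq_abs, sq]
    _ = 1 := h4

lemma dist1_self {d : ℕ} (x : Site d) : dist1 x x = 0 := by simp [dist1]

lemma dist1_comm {d : ℕ} (x y : Site d) : dist1 x y = dist1 y x := by
  unfold dist1; exact Finset.sum_congr rfl fun i _ => abs_sub_comm _ _

lemma eq_update_of_dist1_eq_one {d : ℕ} {n m : Site d} (h : dist1 n m = 1) :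
    ∃ p : Fin d × Bool, m = Function.update n p.1 (n p.1 + if p.2 then 1 else -1) := by
  have hnn : ∀ i ∈ Finset.univ, (0:ℤ) ≤ |n i - m i| := fun i _ => abs_nonneg _
  have hne : ∃ i : Fin d, |n i - m i| ≠ 0 := by
    by_contra hc
    push_neg at hc
    have : dist1 n m = 0 := Finset.sum_eq_zero fun i _ => hc i
    omega
  obtain ⟨i, hi⟩ := hne
  have h1 : (1:ℤ) ≤ |n i - m i| := by
    have := abs_nonneg (n i - m i); omega
  have hsplit : |n i - m i| + ∑ j ∈ Finset.univ.erase i, |n j - m j| = 1 := by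
    have h2 := Finset.add_sum_erase Finset.univ (fun j => |n j - m j|) (Finset.mem_univ i)
    have h3 : ∑ j, |n j - m j| = 1 := h
    linarith
  have hrest_nonneg : (0:ℤ) ≤ ∑ j ∈ Finset.univ.erase i, |n j - m j| :=
    Finset.sum_nonneg fun j _ => abs_nonneg _
  have hieq : |n i - m i| = 1 := by omega
  have hrest : ∑ j ∈ Finset.univ.erase i, |n j - m j| = 0 := by omega
  have hothers : ∀ j, j ≠ i → n j = m j := by
    intro j hj
    have := (Finset.sum_eq_zero_iff_of_nonneg (fun j _ => abs_nonneg (n j - m j))).1 hrest j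
      (Finset.mem_erase.2 ⟨hj, Finset.mem_univ j⟩)
    have := abs_eq_zero.1 this; omega
  rcases abs_eq (by norm_num : (0:ℤ) ≤ 1) |>.1 hieq with hc | hc
  · refine ⟨(i, false), ?_⟩
    funext j
    by_cases hj : j = i
    · subst hj; simp; omega
    · rw [Function.update_of_ne hj]; exact (hothers j hj).symm
  · refine ⟨(i, true), ?_⟩
    funext j
    by_cases hj : j = i
    · subst hj; simp; omega
    · rw [Function.update_of_ne hj]; exact (hothers j hj).symm

lemma neighbor_card {d : ℕ} (Λ : Finset (Site d)) (n : Site d) :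
    ((Finset.univ : Finset {x // x ∈ Λ}).filter
      (fun (m : {x // x ∈ Λ}) => dist1 n (m : Site d) = 1)).card ≤ 2 * d := by
  classical
  have hle : ((Finset.univ : Finset {x // x ∈ Λ}).filter
      (fun (m : {x // x ∈ Λ}) => dist1 n (m : Site d) = 1)).card ≤
      ((Finset.univ : Finset (Fin d × Bool)).image
        (fun p => Function.update n p.1 (n p.1 + if p.2 then 1 else -1))).card := by
    apply Finset.card_le_card_of_injOn (f := fun m : {x // x ∈ Λ} => (m : Site d))
    · intro m hm
      simp only [Finset.mem_coe, Finset.mem_filter] at hm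
      obtain ⟨p, hp⟩ := eq_update_of_dist1_eq_one hm.2
      exact Finset.mem_image.2 ⟨p, Finset.mem_univ p, hp.symm⟩
    · intro a _ b _ hab; exact Subtype.ext hab
  calc _ ≤ _ := hle
    _ ≤ (Finset.univ : Finset (Fin d × Bool)).card := Finset.card_image_le
    _ = 2 * d := by simp [Finset.card_univ, mul_comm]

variable {d : ℕ} {Λ : Finset (Site d)}

lemma row_sum_bound (c : {x // x ∈ Λ} → ℝ) (hc : ∀ x, 0 ≤ c x) :
    ∑ x : {x // x ∈ Λ}, ∑ y : {x // x ∈ Λ},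
      (if dist1 (x : Site d) (y : Site d) = 1 then c x else 0)
      ≤ 2 * d * ∑ x : {x // x ∈ Λ}, c x := by
  classical
  have hx : ∀ x : {x // x ∈ Λ}, ∑ y : {x // x ∈ Λ},
      (if dist1 (x : Site d) (y : Site d) = 1 then c x else 0) ≤ 2 * d * c x := by
    intro x
    rw [Finset.sum_ite, Finset.sum_const, Finset.sum_const_zero, add_zero]
    simp only [nsmul_eq_mul]
    have hcard := neighbor_card Λ (x : Site d)
    calc (((Finset.univ : Finset {x // x ∈ Λ}).filter
          (fun (m : {x // x ∈ Λ}) => dist1 (x : Site d) (m : Site d) = 1)).card : ℝ) * c x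
        ≤ (2 * d : ℕ) * c x := by
          apply mul_le_mul_of_nonneg_right _ (hc x)
          exact_mod_cast hcard
      _ = 2 * d * c x := by push_cast; ring
  calc ∑ x : {x // x ∈ Λ}, ∑ y : {x // x ∈ Λ},
        (if dist1 (x : Site d) (y : Site d) = 1 then c x else 0)
      ≤ ∑ x : {x // x ∈ Λ}, 2 * d * c x := Finset.sum_le_sum fun x _ => hx x
    _ = 2 * d * ∑ x : {x // x ∈ Λ}, c x := by rw [Finset.mul_sum]

lemma offdiag_sum_bound (f g : {x // x ∈ Λ} → ℝ) (t : ℝ) (ht : 0 < t) :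
    ∑ x : {x // x ∈ Λ}, ∑ y : {x // x ∈ Λ},
      (if dist1 (x : Site d) (y : Site d) = 1 then |f x| * |g y| else 0)
      ≤ d * t * ∑ x : {x // x ∈ Λ}, f x ^ 2 + d / t * ∑ y : {x // x ∈ Λ}, g y ^ 2 := by
  classical
  have step1 : ∀ x y : {x // x ∈ Λ},
      (if dist1 (x : Site d) (y : Site d) = 1 then |f x| * |g y| else 0)
      ≤ (if dist1 (x : Site d) (y : Site d) = 1 then t / 2 * f x ^ 2 else 0)
        + (if dist1 (x : Site d) (y : Site d) = 1 then 1 / (2 * t) * g y ^ 2 else 0) := by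
    intro x y
    by_cases h : dist1 (x : Site d) (y : Site d) = 1
    · simp only [h, if_pos]
      have h1 : |f x| * |g y| ≤ t / 2 * f x ^ 2 + 1 / (2 * t) * g y ^ 2 := by
        have key : 2 * t * (|f x| * |g y|) ≤ t ^ 2 * f x ^ 2 + g y ^ 2 := by
          nlinarith [sq_nonneg (t * |f x| - |g y|), sq_abs (f x), sq_abs (g y)]
        have h2t : (0:ℝ) < 2 * t := by linarith
        have heq : t / 2 * f x ^ 2 + 1 / (2 * t) * g y ^ 2 - |f x| * |g y|
            = (t ^ 2 * f x ^ 2 + g y ^ 2 - 2 * t * (|f x| * |g y|)) / (2 * t) := by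
          field_simp
        have hpos : (0:ℝ) ≤ (t ^ 2 * f x ^ 2 + g y ^ 2 - 2 * t * (|f x| * |g y|)) / (2 * t) :=
          div_nonneg (by linarith) (le_of_lt h2t)
        linarith [heq ▸ hpos]
      linarith
    · simp [h]
  calc ∑ x : {x // x ∈ Λ}, ∑ y : {x // x ∈ Λ},
        (if dist1 (x : Site d) (y : Site d) = 1 then |f x| * |g y| else 0)
      ≤ ∑ x : {x // x ∈ Λ}, ∑ y : {x // x ∈ Λ},
        ((if dist1 (x : Site d) (y : Site d) = 1 then t / 2 * f x ^ 2 else 0)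
          + (if dist1 (x : Site d) (y : Site d) = 1 then 1 / (2 * t) * g y ^ 2 else 0)) := by
        apply Finset.sum_le_sum; intro x _; apply Finset.sum_le_sum; intro y _; exact step1 x y
    _ = (∑ x : {x // x ∈ Λ}, ∑ y : {x // x ∈ Λ},
          (if dist1 (x : Site d) (y : Site d) = 1 then t / 2 * f x ^ 2 else 0))
        + ∑ x : {x // x ∈ Λ}, ∑ y : {x // x ∈ Λ},
          (if dist1 (x : Site d) (y : Site d) = 1 then 1 / (2 * t) * g y ^ 2 else 0) := by
        rw [← Finset.sum_add_distrib]
        exact Finset.sum_congr rfl fun x _ => Finset.sum_add_distrib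
    _ ≤ 2 * d * ∑ x : {x // x ∈ Λ}, t / 2 * f x ^ 2
        + 2 * d * ∑ y : {x // x ∈ Λ}, 1 / (2 * t) * g y ^ 2 := by
        apply add_le_add
        · exact row_sum_bound _ (fun x => by positivity)
        · rw [Finset.sum_comm]
          have : ∀ y x : {x // x ∈ Λ},
              (if dist1 (x : Site d) (y : Site d) = 1 then 1 / (2*t) * g y ^ 2 else 0)
              = (if dist1 (y : Site d) (x : Site d) = 1 then 1 / (2*t) * g y ^ 2 else 0) := by
            intro y x; rw [dist1_comm]
          calc ∑ y : {x // x ∈ Λ}, ∑ x : {x // x ∈ Λ},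
                (if dist1 (x : Site d) (y : Site d) = 1 then 1 / (2*t) * g y ^ 2 else 0)
              = ∑ y : {x // x ∈ Λ}, ∑ x : {x // x ∈ Λ},
                (if dist1 (y : Site d) (x : Site d) = 1 then 1 / (2*t) * g y ^ 2 else 0) :=
                Finset.sum_congr rfl fun y _ => Finset.sum_congr rfl fun x _ => this y x
            _ ≤ _ := row_sum_bound _ (fun y => by positivity)
    _ = d * t * ∑ x : {x // x ∈ Λ}, f x ^ 2 + d / t * ∑ y : {x // x ∈ Λ}, g y ^ 2 := by
        simp only [← Finset.mul_sum]
        have hAB : ∀ A B : ℝ, 2 * (d:ℝ) * (t / 2 * A) + 2 * d * (1 / (2 * t) * B)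
            = d * t * A + d / t * B := by
          intro A B; field_simp
        exact hAB _ _


lemma key_vec {d : ℕ} (M : ℕ) (lam : ℝ) (ω : Site d → ℝ) (Λ : Finset (Site d))
    (hd : 1 ≤ d) {Etil : ℝ} (hEtil : Etil < 0) {E : ℝ} (hE : E ≤ Etil)
    (ψ : {x // x ∈ Λ} → ℝ) (hψ : (HBox M lam ω Λ).mulVec ψ = E • ψ) :
    ∑ x : {x // x ∈ Λ}, ψ x ^ 2 ≤ (1 + 4 * d ^ 2 / Etil ^ 2) *
      ∑ x : {x // x ∈ Λ}, (if inGamma M (x : Site d) then ψ x ^ 2 else 0) := by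
  classical
  set φ : {x // x ∈ Λ} → ℝ := fun x => if inGamma M (x : Site d) then 0 else ψ x with hφdef
  set χ : {x // x ∈ Λ} → ℝ := fun x => if inGamma M (x : Site d) then ψ x else 0 with hχdef
  have hsum : ∀ x, ψ x = φ x + χ x := by
    intro x; simp only [hφdef, hχdef]; split_ifs <;> ring
  set q := ∑ x : {x // x ∈ Λ}, φ x ^ 2 with hqdef
  set p := ∑ x : {x // x ∈ Λ}, χ x ^ 2 with hpdef
  have hq0 : 0 ≤ q := Finset.sum_nonneg fun x _ => sq_nonneg _
  have hp0 : 0 ≤ p := Finset.sum_nonneg fun x _ => sq_nonneg _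
  have hψsq : ∑ x : {x // x ∈ Λ}, ψ x ^ 2 = q + p := by
    rw [hqdef, hpdef, ← Finset.sum_add_distrib]
    refine Finset.sum_congr rfl fun x _ => ?_
    simp only [hφdef, hχdef]; split_ifs <;> ring
  have hptarget : ∑ x : {x // x ∈ Λ}, (if inGamma M (x : Site d) then ψ x ^ 2 else 0) = p := by
    rw [hpdef]
    refine Finset.sum_congr rfl fun x _ => ?_
    simp only [hχdef]; split_ifs <;> simp
  -- the quadratic form identity
  have hid : ∑ x : {x // x ∈ Λ}, φ x * ((HBox M lam ω Λ).mulVec ψ) x = E * q := by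
    rw [hψ]
    have : ∀ x : {x // x ∈ Λ}, φ x * (E • ψ) x = E * φ x ^ 2 := by
      intro x
      simp only [Pi.smul_apply, smul_eq_mul, hφdef]
      split_ifs <;> ring
    rw [Finset.sum_congr rfl fun x _ => this x, ← Finset.mul_sum]
  have hexp : ∑ x : {x // x ∈ Λ}, φ x * ((HBox M lam ω Λ).mulVec ψ) x
      = (∑ x : {x // x ∈ Λ}, ∑ y : {x // x ∈ Λ}, HBox M lam ω Λ x y * φ x * φ y)
        + ∑ x : {x // x ∈ Λ}, ∑ y : {x // x ∈ Λ}, HBox M lam ω Λ x y * φ x * χ y := by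
    rw [← Finset.sum_add_distrib]
    refine Finset.sum_congr rfl fun x _ => ?_
    rw [← Finset.sum_add_distrib]
    simp only [Matrix.mulVec, dotProduct, Finset.mul_sum]
    refine Finset.sum_congr rfl fun y _ => ?_
    rw [hsum y]; ring
  -- T1 ≥ 0
  have hT1 : 0 ≤ ∑ x : {x // x ∈ Λ}, ∑ y : {x // x ∈ Λ}, HBox M lam ω Λ x y * φ x * φ y := by
    have hterm : ∀ x y : {x // x ∈ Λ},
        (if x = y then 2 * (d:ℝ) * φ x ^ 2 else 0)
          - (if dist1 (x : Site d) (y : Site d) = 1 then |φ x| * |φ y| else 0)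
        ≤ HBox M lam ω Λ x y * φ x * φ y := by
      intro x y
      by_cases hxy : x = y
      · subst hxy
        have hd0 : dist1 (x : Site d) (x : Site d) = 0 := dist1_self _
        rw [if_pos rfl, if_neg (by rw [hd0]; norm_num)]
        have hH : HBox M lam ω Λ x x = 2 * d + lam * sporadicV M ω (x : Site d) := by
          simp [HBox]
        rw [hH]
        by_cases hg : inGamma M (x : Site d)
        · have hz : φ x = 0 := by simp [hφdef, hg]
          rw [hz]; simp
        · have hV : sporadicV M ω (x : Site d) = 0 := by simp [sporadicV, hg]
          rw [hV]
          have : (2 * (d:ℝ) + lam * 0) * φ x * φ x = 2 * d * φ x ^ 2 := by ring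
          rw [this]
          simp
      · have hc : (x : Site d) ≠ (y : Site d) := fun h => hxy (Subtype.ext h)
        rw [if_neg hxy]
        simp only [HBox, if_neg hc]
        by_cases hdist : dist1 (x : Site d) (y : Site d) = 1
        · rw [if_pos hdist, if_pos hdist]
          have : φ x * φ y ≤ |φ x| * |φ y| := by
            rw [← abs_mul]; exact le_abs_self _
          nlinarith [this]
        · rw [if_neg hdist, if_neg hdist]; simp
    have hbound := offdiag_sum_bound (Λ := Λ) φ φ 1 one_pos
    have hdiag : ∑ x : {x // x ∈ Λ}, ∑ y : {x // x ∈ Λ},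
        (if x = y then 2 * (d:ℝ) * φ x ^ 2 else 0) = 2 * d * q := by
      rw [hqdef, Finset.mul_sum]
      refine Finset.sum_congr rfl fun x _ => ?_
      rw [Finset.sum_ite_eq Finset.univ x (fun _ => 2 * (d:ℝ) * φ x ^ 2)]
      simp
    have hlow : 2 * (d:ℝ) * q - (∑ x : {x // x ∈ Λ}, ∑ y : {x // x ∈ Λ},
        (if dist1 (x : Site d) (y : Site d) = 1 then |φ x| * |φ y| else 0))
        ≤ ∑ x : {x // x ∈ Λ}, ∑ y : {x // x ∈ Λ}, HBox M lam ω Λ x y * φ x * φ y := by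
      rw [← hdiag, ← Finset.sum_sub_distrib]
      refine Finset.sum_le_sum fun x _ => ?_
      rw [← Finset.sum_sub_distrib]
      exact Finset.sum_le_sum fun y _ => hterm x y
    have : (d:ℝ) * 1 * q + (d:ℝ) / 1 * q ≤ 2 * d * q := by
      simp only [mul_one, div_one]; ring_nf; exact le_refl _
    linarith
  -- T2 lower bound
  set t : ℝ := (-Etil) / (2 * d) with htdef
  have hdpos : (0:ℝ) < d := by exact_mod_cast hd
  have ht : 0 < t := by
    apply div_pos (by linarith) (by linarith)
  have hT2 : -(d * t * q + d / t * p)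
      ≤ ∑ x : {x // x ∈ Λ}, ∑ y : {x // x ∈ Λ}, HBox M lam ω Λ x y * φ x * χ y := by
    have hterm : ∀ x y : {x // x ∈ Λ},
        -(if dist1 (x : Site d) (y : Site d) = 1 then |φ x| * |χ y| else 0)
        ≤ HBox M lam ω Λ x y * φ x * χ y := by
      intro x y
      by_cases hxy : (x : Site d) = (y : Site d)
      · have hxy' : x = y := Subtype.ext hxy
        subst hxy'
        rw [if_neg (by rw [dist1_self]; norm_num)]
        have : φ x * χ x = 0 := by
          simp only [hφdef, hχdef]; split_ifs <;> ring
        rw [mul_assoc, this, mul_zero]; norm_num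
      · simp only [HBox, if_neg hxy]
        by_cases hdist : dist1 (x : Site d) (y : Site d) = 1
        · rw [if_pos hdist, if_pos hdist]
          have : φ x * χ y ≤ |φ x| * |χ y| := by
            rw [← abs_mul]; exact le_abs_self _
          nlinarith [this]
        · rw [if_neg hdist, if_neg hdist]; simp
    have hbound := offdiag_sum_bound (Λ := Λ) φ χ t ht
    have hlow : -(∑ x : {x // x ∈ Λ}, ∑ y : {x // x ∈ Λ},
        (if dist1 (x : Site d) (y : Site d) = 1 then |φ x| * |χ y| else 0))
        ≤ ∑ x : {x // x ∈ Λ}, ∑ y : {x // x ∈ Λ}, HBox M lam ω Λ x y * φ x * χ y := by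
      rw [← Finset.sum_neg_distrib]
      refine Finset.sum_le_sum fun x _ => ?_
      rw [← Finset.sum_neg_distrib]
      exact Finset.sum_le_sum fun y _ => hterm x y
    linarith
  -- combine
  have hEq : E * q = _ + _ := hid.symm.trans hexp
  have hmain : -Etil * q ≤ d * t * q + d / t * p := by
    have h1 : -(d * t * q + d / t * p) ≤ E * q := by rw [hEq]; linarith
    have h2 : E * q ≤ Etil * q := mul_le_mul_of_nonneg_right hE hq0
    linarith
  have hEne : Etil ≠ 0 := ne_of_lt hEtil
  have hdne : (d:ℝ) ≠ 0 := ne_of_gt hdpos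
  have hdt : (d:ℝ) * t = -Etil / 2 := by
    rw [htdef]; field_simp
  have hdt2 : (d:ℝ) / t = 2 * d ^ 2 / (-Etil) := by
    rw [htdef]; field_simp
  have hEtil' : (0:ℝ) < -Etil := by linarith
  have hqp : q ≤ 4 * d ^ 2 / Etil ^ 2 * p := by
    rw [hdt, hdt2] at hmain
    have h3 : (-Etil) / 2 * q ≤ 2 * d ^ 2 / (-Etil) * p := by linarith
    have h4 : q ≤ (2 / (-Etil)) * (2 * d ^ 2 / (-Etil) * p) := by
      have := mul_le_mul_of_nonneg_left h3 (le_of_lt (by positivity : (0:ℝ) < 2 / (-Etil)))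
      calc q = (2 / (-Etil)) * ((-Etil) / 2 * q) := by field_simp
        _ ≤ _ := this
    calc q ≤ (2 / (-Etil)) * (2 * d ^ 2 / (-Etil) * p) := h4
      _ = 4 * d ^ 2 / Etil ^ 2 * p := by
          rw [div_mul_eq_mul_div, div_mul_eq_mul_div]
          field_simp
          ring
  rw [hψsq, hptarget]
  have : (1 + 4 * d ^ 2 / Etil ^ 2) * p = p + 4 * d ^ 2 / Etil ^ 2 * p := by ring
  linarith


/-- For every `Ẽ < 0` there is a constant `C_Ẽ` (independent of `Λ`, `ω` and `I`)
such that for every finite box `Λ ⊂ ℤ^d` and every interval `I ⊆ (-∞, Ẽ]`,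
`tr E_{H_{ω,Λ}}(I) ≤ C_Ẽ · tr (χ_{Γ∩Λ} E_{H_{ω,Λ}}(I))`. -/
theorem trace_restriction_bound
    (d M : ℕ) (hd : 1 ≤ d) (hM : 2 ≤ M)
    (lam : ℝ) (hlam : 0 < lam)
    (Etil : ℝ) (hEtil : Etil < 0) :
    ∃ C : ℝ, ∀ a b : Site d, ∀ ω : Site d → ℝ, ∀ lo hi : ℝ, hi ≤ Etil →
      (specProj (HBox_isHermitian M lam ω (Finset.Icc a b)) (Set.Icc lo hi)).trace ≤
        C * (gammaProj M (Finset.Icc a b) *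
          specProj (HBox_isHermitian M lam ω (Finset.Icc a b)) (Set.Icc lo hi)).trace := by
  classical
  refine ⟨1 + 4 * d ^ 2 / Etil ^ 2, ?_⟩
  intro a b ω lo hi hhi
  set Λ : Finset (Site d) := Finset.Icc a b with hΛdef
  set hH := HBox_isHermitian M lam ω Λ with hHdef
  set I : Set ℝ := Set.Icc lo hi with hIdef
  have tr_spec : (specProj hH I).trace
      = ∑ i : {x // x ∈ Λ}, (if hH.eigenvalues i ∈ I then (1:ℝ) else 0) := by
    unfold specProj
    rw [Matrix.trace_sum]
    refine Finset.sum_congr rfl fun i _ => ?_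
    rw [apply_ite Matrix.trace, Matrix.trace_zero]
    congr 1
    unfold Matrix.trace
    simp only [Matrix.diag_apply, Matrix.of_apply]
    exact sum_sq_eigenvectorBasis hH i
  have proj_apply : ∀ x : {x // x ∈ Λ}, specProj hH I x x
      = ∑ i : {x // x ∈ Λ}, (if hH.eigenvalues i ∈ I then
          hH.eigenvectorBasis i x * hH.eigenvectorBasis i x else 0) := by
    intro x
    unfold specProj
    rw [Matrix.sum_apply]
    refine Finset.sum_congr rfl fun i _ => ?_
    rw [apply_ite (fun m : Matrix {x // x ∈ Λ} {x // x ∈ Λ} ℝ => m x x)]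
    simp
  have tr_gp : (gammaProj M Λ * specProj hH I).trace
      = ∑ i : {x // x ∈ Λ}, (if hH.eigenvalues i ∈ I then
          (∑ x : {x // x ∈ Λ}, if inGamma M (x : Site d) then
            hH.eigenvectorBasis i x ^ 2 else 0) else 0) := by
    have step1 : (gammaProj M Λ * specProj hH I).trace
        = ∑ x : {x // x ∈ Λ}, (if inGamma M (x : Site d) then (1:ℝ) else 0)
            * specProj hH I x x := by
      unfold Matrix.trace gammaProj
      refine Finset.sum_congr rfl fun x _ => ?_
      simp [Matrix.diagonal_mul]
    rw [step1]
    calc ∑ x : {x // x ∈ Λ}, (if inGamma M (x : Site d) then (1:ℝ) else 0)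
            * specProj hH I x x
        = ∑ x : {x // x ∈ Λ}, ∑ i : {x // x ∈ Λ},
            (if inGamma M (x : Site d) then (1:ℝ) else 0)
              * (if hH.eigenvalues i ∈ I then
                  hH.eigenvectorBasis i x * hH.eigenvectorBasis i x else 0) := by
          refine Finset.sum_congr rfl fun x _ => ?_
          rw [proj_apply x, Finset.mul_sum]
      _ = ∑ i : {x // x ∈ Λ}, ∑ x : {x // x ∈ Λ},
            (if inGamma M (x : Site d) then (1:ℝ) else 0)
              * (if hH.eigenvalues i ∈ I then
                  hH.eigenvectorBasis i x * hH.eigenvectorBasis i x else 0) :=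
          Finset.sum_comm
      _ = _ := by
          refine Finset.sum_congr rfl fun i _ => ?_
          by_cases hcond : hH.eigenvalues i ∈ I
          · simp only [hcond, if_true]
            refine Finset.sum_congr rfl fun x _ => ?_
            split_ifs <;> simp [sq]
          · simp [hcond]
  rw [tr_spec, tr_gp, Finset.mul_sum]
  refine Finset.sum_le_sum fun i _ => ?_
  by_cases hcond : hH.eigenvalues i ∈ I
  · simp only [hcond, if_true]
    have hEle : hH.eigenvalues i ≤ Etil := le_trans hcond.2 hhi
    have hmul : (HBox M lam ω Λ).mulVec (fun x => hH.eigenvectorBasis i x)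
        = hH.eigenvalues i • (fun x => hH.eigenvectorBasis i x) :=
      hH.mulVec_eigenvectorBasis i
    have hvec := key_vec M lam ω Λ hd hEtil hEle
      (fun x => hH.eigenvectorBasis i x) hmul
    have hnorm : ∑ x : {x // x ∈ Λ},
        (fun x => hH.eigenvectorBasis i x) x ^ 2 = 1 := by
      rw [← sum_sq_eigenvectorBasis hH i]
      refine Finset.sum_congr rfl fun x _ => ?_
      rw [sq]
    rw [hnorm] at hvec
    exact hvec
  · simp [hcond]


end
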